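/- Let μ_p and μ_u be probability measures on a measurable space X with μ_p ≪ μ_u, let g : X → Y be a measurable map into a measurable space Y, and let h : Y → ℝ≥0∞ be measurable with (dμ_p/dμ_u)(x) = h(g(x)) for μ_u-almost every x. Then for μ_u-almost every x ∈ X, d(μ_p.map g)/d(μ_u.map g)(g(x)) = (dμ_p/dμ_u)(x); in particular, for any α ∈ [0,1] the posterior α·(dμ_p/dμ_u)(x) computed in the original space coincides μ_u-almost everywhere with the posterior α·d(μ_p.map g)/d(μ_u.map g)(g(x)) computed from the transformed data. -/

import Mathlib

open MeasureTheory ENNReal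

/-- Posterior preservation (part of the paper's Lemma 1): if the density ratio
`dμp/dμu` factors through `g`, then the density ratio of the pushforwards,
evaluated at `g x`, coincides `μu`-a.e. with the original density ratio; in
particular, for any prior `α ∈ [0,1]`, the posterior computed in the original
space coincides a.e. with the posterior computed from the transformed data. -/
theorem ntc_preserves_posteriors {X Y : Type*} [MeasurableSpace X] [MeasurableSpace Y]
    (μp μu : Measure X) [IsProbabilityMeasure μp] [IsProbabilityMeasure μu]
    (hac : μp ≪ μu) (g : X → Y) (hg : Measurable g) (h : Y → ℝ≥0∞) (hh : Measurable h)
    (hfac : ∀ᵐ x ∂μu, μp.rnDeriv μu x = h (g x)) :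
    (∀ᵐ x ∂μu, (μp.map g).rnDeriv (μu.map g) (g x) = μp.rnDeriv μu x) ∧
      ∀ α ∈ Set.Icc (0 : ℝ) 1,
        ∀ᵐ x ∂μu,
          ENNReal.ofReal α * μp.rnDeriv μu x
            = ENNReal.ofReal α * (μp.map g).rnDeriv (μu.map g) (g x) := by
  have hmap : μp.map g = (μu.map g).withDensity h := by
    ext s hs
    rw [Measure.map_apply hg hs, withDensity_apply _ hs,
      ← Measure.withDensity_rnDeriv_eq μp μu hac,
      withDensity_apply _ (hg hs),
      setLIntegral_map hs hh hg]
    exact setLIntegral_congr_fun_ae (hg hs) (hfac.mono fun x hx _ => hx)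
  have hrn : ((μu.map g).withDensity h).rnDeriv (μu.map g) =ᵐ[μu.map g] h :=
    Measure.rnDeriv_withDensity (μu.map g) hh
  have hrn' : ∀ᵐ x ∂μu, (μp.map g).rnDeriv (μu.map g) (g x) = h (g x) := by
    rw [hmap]
    exact ae_eq_comp hg.aemeasurable hrn
  have hmain : ∀ᵐ x ∂μu, (μp.map g).rnDeriv (μu.map g) (g x) = μp.rnDeriv μu x := by
    filter_upwards [hrn', hfac] with x h1 h2
    rw [h1, h2]
  refine ⟨hmain, fun α _ => ?_⟩
  filter_upwards [hmain] with x hx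
  rw [hx]
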